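/- For all x ≥ 0, L(x/(1+x)) + L(1/(1+x)) = L(1) = π²/6, where L is the Rogers dilogarithm. -/

import Mathlib

open MeasureTheory Real

/-- The Euler dilogarithm `Li₂(x) = -∫₀ˣ log(1-y)/y dy`. -/
noncomputable def Li2 (x : ℝ) : ℝ := -∫ y in (0:ℝ)..x, Real.log (1 - y) / y

/-- The Rogers dilogarithm `L(x) = Li₂(x) + (1/2)·log x·log(1-x)`
(agreeing with `L(0) = 0`, `L(1) = Li₂(1) = π²/6` since `Real.log 0 = 0`). -/
noncomputable def RL (x : ℝ) : ℝ := Li2 x + (1/2) * Real.log x * Real.log (1 - x)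

open Set


noncomputable def dlog (y : ℝ) : ℝ := Real.log (1 - y) / y

lemma measurable_dlog : Measurable dlog :=
  ((measurable_const.sub measurable_id).log).div measurable_id

lemma dlog_intOn : IntegrableOn dlog (Ioo 0 1) := by
  have hsplit : Ioo (0:ℝ) 1 = Ioc 0 (1/2) ∪ Ioo (1/2) 1 :=
    (Set.Ioc_union_Ioo_eq_Ioo (by norm_num) (by norm_num)).symm
  rw [hsplit]
  apply IntegrableOn.union
  · -- bounded part
    apply Measure.integrableOn_of_bounded (M := 2)
    · exact ((measure_Ioc_lt_top).ne)
    · exact measurable_dlog.aestronglyMeasurable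
    · rw [ae_restrict_iff' measurableSet_Ioc]
      refine ae_of_all _ fun y hy => ?_
      obtain ⟨hy0, hy2⟩ := hy
      have h1y : (0:ℝ) < 1 - y := by linarith
      have hlogle : -Real.log (1 - y) ≤ 2 * y := by
        have := Real.log_le_sub_one_of_pos (x := (1 - y)⁻¹) (by positivity)
        rw [Real.log_inv] at this
        have : -Real.log (1-y) ≤ (1-y)⁻¹ - 1 := this
        have h2 : (1-y)⁻¹ ≤ 1 + 2 * y := by
          rw [inv_le_iff_one_le_mul₀ h1y]
          nlinarith
        linarith
      have hlognp : Real.log (1 - y) ≤ 0 := Real.log_nonpos (by linarith) (by linarith)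
      rw [Real.norm_eq_abs, dlog, abs_div, abs_of_nonneg hy0.le, abs_of_nonpos hlognp,
        div_le_iff₀ hy0]
      linarith
  · -- dominated by 4 * (1-y)^(-1/2)
    set g : ℝ → ℝ := fun y => 4 * (1 - y) ^ (-(1/2) : ℝ) with hg
    have hgint : IntegrableOn g (Ioo (1/2) 1) := by
      have h1 : IntervalIntegrable (fun t : ℝ => t ^ (-(1/2) : ℝ)) volume 0 (1/2) :=
        intervalIntegral.intervalIntegrable_rpow' (by norm_num)
      have h2 := (h1.comp_sub_left 1).const_mul 4
      norm_num at h2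
      have h3 : IntegrableOn g (Ioc (1/2) 1) := h2.2
      exact h3.mono_set Ioo_subset_Ioc_self
    refine MeasureTheory.Integrable.mono hgint (measurable_dlog.aestronglyMeasurable) ?_
    rw [ae_restrict_iff' measurableSet_Ioo]
    refine ae_of_all _ fun y hy => ?_
    obtain ⟨hy2, hy1⟩ := hy
    have h1y : (0:ℝ) < 1 - y := by linarith
    have hy0 : (0:ℝ) < y := by linarith
    have hrp : (0:ℝ) < (1 - y) ^ (-(1/2) : ℝ) := Real.rpow_pos_of_pos h1y _
    have hlog : -Real.log (1 - y) ≤ 2 * (1 - y) ^ (-(1/2) : ℝ) := by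
      have hlt := Real.log_le_sub_one_of_pos (x := (1 - y) ^ (-(1/2) : ℝ)) hrp
      rw [Real.log_rpow h1y] at hlt
      linarith
    have hlognp : Real.log (1 - y) ≤ 0 := Real.log_nonpos (by linarith) (by linarith)
    rw [Real.norm_eq_abs, dlog, abs_div, abs_of_nonneg hy0.le, abs_of_nonpos hlognp,
      div_le_iff₀ hy0, Real.norm_eq_abs, abs_of_nonneg (by positivity : (0:ℝ) ≤ g y)]
    calc -Real.log (1-y) ≤ 2 * (1 - y) ^ (-(1/2) : ℝ) := hlog
      _ = (4 * (1 - y) ^ (-(1/2) : ℝ)) * (1/2) := by ring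
      _ ≤ g y * y := by
          apply mul_le_mul_of_nonneg_left hy2.le (by positivity)
lemma dlog_intOn_Icc : IntegrableOn dlog (Icc 0 1) := by
  rw [integrableOn_Icc_iff_integrableOn_Ioo]; exact dlog_intOn

lemma dlog_ii {x : ℝ} (h0 : 0 ≤ x) (h1 : x ≤ 1) : IntervalIntegrable dlog volume 0 x := by
  apply IntegrableOn.intervalIntegrable
  apply dlog_intOn_Icc.mono_set
  rw [uIcc_of_le h0]
  exact Icc_subset_Icc le_rfl h1

lemma Li2_eq (x : ℝ) : Li2 x = -∫ y in (0:ℝ)..x, dlog y := rfl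

lemma Li2_contOn : ContinuousOn Li2 (Icc 0 1) := by
  have h := intervalIntegral.continuousOn_primitive_interval
    (a := 0) (b := 1) (μ := volume) (f := dlog) (by
      rw [uIcc_of_le (by norm_num : (0:ℝ) ≤ 1)]; exact dlog_intOn_Icc)
  rw [uIcc_of_le (by norm_num : (0:ℝ) ≤ 1)] at h
  exact h.neg

lemma dlog_contAt {x : ℝ} (hx : x ∈ Ioo (0:ℝ) 1) : ContinuousAt dlog x := by
  have h1 : (1:ℝ) - x ≠ 0 := by have := hx.2; intro h; linarith [sub_eq_zero.mp h]
  exact ((Real.continuousAt_log h1).comp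
    ((continuous_const.sub continuous_id).continuousAt)).div continuousAt_id hx.1.ne'

lemma Li2_hasDerivAt {x : ℝ} (hx : x ∈ Ioo (0:ℝ) 1) :
    HasDerivAt Li2 (-(Real.log (1 - x) / x)) x := by
  have h := intervalIntegral.integral_hasDerivAt_right (dlog_ii hx.1.le hx.2.le)
    (measurable_dlog.aestronglyMeasurable.stronglyMeasurableAtFilter)
    (dlog_contAt hx)
  exact h.neg

lemma RL_hasDerivAt {x : ℝ} (hx : x ∈ Ioo (0:ℝ) 1) :
    HasDerivAt RL (-(1/2) * (Real.log (1-x)/x + Real.log x/(1-x))) x := by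
  obtain ⟨h0, h1⟩ := hx
  have h1x : (0:ℝ) < 1 - x := by linarith
  have hlog1 : HasDerivAt (fun y : ℝ => Real.log (1 - y)) ((1-x)⁻¹ * (0 - 1)) x :=
    (Real.hasDerivAt_log h1x.ne').comp x ((hasDerivAt_const x (1:ℝ)).sub (hasDerivAt_id x))
  have hprod : HasDerivAt (fun y : ℝ => (1/2) * Real.log y * Real.log (1 - y))
      ((1/2 * x⁻¹) * Real.log (1-x) + (1/2 * Real.log x) * ((1-x)⁻¹ * (0-1))) x :=
    (((Real.hasDerivAt_log h0.ne').const_mul (1/2)).mul hlog1)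
  have := (Li2_hasDerivAt ⟨h0, h1⟩).add hprod
  refine this.congr_deriv ?_
  field_simp
  ring

lemma tendsto_loglog : Filter.Tendsto (fun x => Real.log x * Real.log (1 - x))
    (nhdsWithin 0 (Ioi 0)) (nhds 0) := by
  have A : Filter.Tendsto (fun x : ℝ => Real.log x * x) (nhdsWithin 0 (Ioi 0)) (nhds 0) := by
    simpa using tendsto_log_mul_rpow_nhdsGT_zero one_pos
  have B : Filter.Tendsto (fun x : ℝ => Real.log (1 - x) / x) (nhdsWithin 0 (Ioi 0))
      (nhds (-1)) := by
    have hd : HasDerivAt (fun y : ℝ => Real.log (1 - y)) (-1) 0 := by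
      have : HasDerivAt (fun y : ℝ => Real.log (1 - y)) ((1-(0:ℝ))⁻¹ * (0 - 1)) 0 :=
        (Real.hasDerivAt_log (by norm_num)).comp 0
          ((hasDerivAt_const 0 (1:ℝ)).sub (hasDerivAt_id 0))
      simpa using this
    have := hasDerivAt_iff_tendsto_slope.mp hd
    have h2 := this.mono_left (nhdsWithin_mono 0 (by intro x hx; exact ne_of_gt hx))
    refine h2.congr' ?_
    filter_upwards [self_mem_nhdsWithin] with x hx
    simp [slope_def_field, Real.log_one]
  have C := A.mul B
  rw [zero_mul] at C
  refine C.congr' ?_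
  filter_upwards [self_mem_nhdsWithin] with x (hx : 0 < x)
  field_simp

lemma cwa_loglog_zero : ContinuousWithinAt
    (fun x => (1/2) * Real.log x * Real.log (1 - x)) (Icc 0 1) 0 := by
  rw [← continuousWithinAt_diff_self]
  have hsub : Icc (0:ℝ) 1 \ {0} ⊆ Ioi 0 := fun t ht => lt_of_le_of_ne ht.1.1 (Ne.symm ht.2)
  unfold ContinuousWithinAt
  have h0 : (fun x : ℝ => (1/2) * Real.log x * Real.log (1 - x)) 0 = 0 := by simp
  rw [h0]
  have := tendsto_loglog.const_mul (1/2)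
  rw [mul_zero] at this
  exact (this.congr fun x => by ring).mono_left (nhdsWithin_mono _ hsub)

lemma RL_contOn : ContinuousOn RL (Icc 0 1) := by
  apply Li2_contOn.add
  intro x hx
  rcases eq_or_lt_of_le hx.1 with h0 | h0
  · exact (by rw [← h0]; exact cwa_loglog_zero)
  rcases eq_or_lt_of_le hx.2 with h1 | h1
  · -- x = 1 : compose with reflection
    subst h1
    have hm : Set.MapsTo (fun x : ℝ => 1 - x) (Icc 0 1) (Icc 0 1) := by
      intro t ht
      simp only [Set.mem_Icc] at *
      constructor <;> linarith [ht.1, ht.2]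
    have hc : ContinuousWithinAt (fun x : ℝ => 1 - x) (Icc 0 1) 1 :=
      (continuous_const.sub continuous_id).continuousWithinAt
    have hcw' : ContinuousWithinAt (fun t => (1/2) * Real.log t * Real.log (1 - t))
        (Icc 0 1) ((fun x : ℝ => 1 - x) 1) := by
      norm_num
      exact (by simpa using cwa_loglog_zero)
    have hcomp := hcw'.comp hc hm
    refine hcomp.congr (fun t _ => ?_) ?_
    · show _ = (1/2) * Real.log (1-t) * Real.log (1 - (1-t))
      rw [sub_sub_cancel]; ring
    · show _ = (1/2) * Real.log (1-1) * Real.log (1 - (1-1))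
      norm_num
  · have hc1 : ContinuousAt (fun x : ℝ => Real.log (1 - x)) x :=
      (continuousAt_const.sub continuousAt_id).log (by simp only [Pi.sub_apply, id]; intro h; linarith [sub_eq_zero.mp h])
    exact ((continuousAt_const.mul (Real.continuousAt_log h0.ne')).mul hc1).continuousWithinAt

lemma RL_zero : RL 0 = 0 := by
  simp [RL, Li2, intervalIntegral.integral_same]

lemma g_hasDerivAt {y : ℝ} (hy : y ∈ Ioo (0:ℝ) 1) :
    HasDerivAt (fun t => RL t + RL (1 - t)) 0 y := by
  obtain ⟨h0, h1⟩ := hy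
  have h1y : (1:ℝ) - y ∈ Ioo (0:ℝ) 1 := ⟨by linarith, by linarith⟩
  have hinner : HasDerivAt (fun t : ℝ => 1 - t) (0 - 1) y :=
    (hasDerivAt_const y (1:ℝ)).sub (hasDerivAt_id y)
  have hcomp := (RL_hasDerivAt h1y).comp y hinner
  have := (RL_hasDerivAt ⟨h0, h1⟩).add hcomp
  refine this.congr_deriv ?_
  rw [sub_sub_cancel]
  ring

lemma g_contOn : ContinuousOn (fun t => RL t + RL (1 - t)) (Icc 0 1) := by
  apply RL_contOn.add
  apply RL_contOn.comp (continuous_const.sub continuous_id).continuousOn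
  intro t ht
  simp only [Set.mem_Icc, id, Pi.sub_apply] at *
  constructor <;> linarith [ht.1, ht.2]

lemma rogers_refl {y : ℝ} (hy : y ∈ Ioo (0:ℝ) 1) : RL y + RL (1 - y) = RL 1 := by
  set g : ℝ → ℝ := fun t => RL t + RL (1 - t) with hgdef
  have step : ∀ a b : ℝ, a ∈ Ioo (0:ℝ) 1 → b ∈ Ioo (0:ℝ) 1 → a ≤ b → g b = g a := by
    intro a b ha hb hab
    have hsub : Icc a b ⊆ Icc (0:ℝ) 1 := Icc_subset_Icc ha.1.le hb.2.le
    exact constant_of_has_deriv_right_zero (g_contOn.mono hsub)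
      (fun t ht => (g_hasDerivAt ⟨lt_of_lt_of_le ha.1 ht.1, ht.2.trans_le hb.2.le⟩
        |>.hasDerivWithinAt)) b ⟨hab, le_rfl⟩
  have hconst : ∀ a : ℝ, a ∈ Ioo (0:ℝ) 1 → g a = g y := by
    intro a ha
    rcases le_total a y with h | h
    · exact (step a y ha hy h).symm
    · exact step y a hy ha h
  -- g 0 = g y via limits
  have hIoo : Ioo (0:ℝ) 1 ∈ nhdsWithin (0:ℝ) (Ioi 0) :=
    Ioo_mem_nhdsGT_of_mem ⟨le_rfl, one_pos⟩
  have T1 : Filter.Tendsto g (nhdsWithin 0 (Ioi 0)) (nhds (g 0)) := by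
    have := (g_contOn 0 ⟨le_rfl, zero_le_one⟩)
    refine this.mono_left (nhdsWithin_le_iff.mpr ?_)
    exact Filter.mem_of_superset hIoo Ioo_subset_Icc_self
  have T2 : Filter.Tendsto g (nhdsWithin 0 (Ioi 0)) (nhds (g y)) := by
    refine Filter.Tendsto.congr' ?_ tendsto_const_nhds
    filter_upwards [hIoo] with t ht
    exact (hconst t ht).symm
  have h0y : g 0 = g y := tendsto_nhds_unique T1 T2
  have : g y = g 0 := h0y.symm
  rw [hgdef] at this
  simp only at this
  rw [this]
  rw [sub_zero, RL_zero, zero_add]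

lemma summable_inv_sq : Summable (fun n : ℕ => (1:ℝ) / ((n:ℝ) + 1) ^ 2) := by
  have h := hasSum_zeta_two.summable
  have := (summable_nat_add_iff (f := fun n : ℕ => (1:ℝ) / (n:ℝ) ^ 2) 1).mpr h
  refine this.congr fun n => ?_
  push_cast
  ring_nf

lemma hasSum_inv_sq : HasSum (fun n : ℕ => (1:ℝ) / ((n:ℝ) + 1) ^ 2) (π ^ 2 / 6) := by
  have h2 := (hasSum_nat_add_iff' (f := fun n : ℕ => (1:ℝ) / (n:ℝ) ^ 2) 1).mpr hasSum_zeta_two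
  simp only [Finset.range_one, Finset.sum_singleton, Nat.cast_zero] at h2
  norm_num at h2
  refine h2.congr_fun fun n => by push_cast; ring_nf

lemma Li2_one : Li2 1 = π ^ 2 / 6 := by
  have hle : (0:ℝ) ≤ 1 := zero_le_one
  set F : ℕ → ℝ → ℝ := fun n y => y ^ n / ((n:ℝ) + 1) with hF
  have hFcont : ∀ n, Continuous (F n) := fun n => (continuous_pow n).div_const _
  have hFint : ∀ n, Integrable (F n) (volume.restrict (Ioo (0:ℝ) 1)) := fun n =>
    ((hFcont n).continuousOn.integrableOn_compact isCompact_Icc).mono_set (Ioo_subset_Icc_self : Ioo (0:ℝ) 1 ⊆ Icc 0 1)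
  have hIoo : ∀ n : ℕ, ∫ y in Ioo (0:ℝ) 1, F n y = 1 / ((n:ℝ) + 1) ^ 2 := by
    intro n
    rw [← integral_Ioc_eq_integral_Ioo, ← intervalIntegral.integral_of_le hle]
    rw [hF]
    simp only
    rw [intervalIntegral.integral_div, integral_pow]
    push_cast
    rw [one_pow, zero_pow (by positivity)]
    field_simp
    ring
  have hnorm : ∀ n : ℕ, ∫ y in Ioo (0:ℝ) 1, ‖F n y‖ = 1 / ((n:ℝ) + 1) ^ 2 := by
    intro n
    rw [← hIoo n]
    apply setIntegral_congr_fun measurableSet_Ioo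
    intro y hy
    show ‖F n y‖ = F n y
    have h1 : (0:ℝ) ≤ F n y := by
      rw [hF]; simp only
      have := hy.1
      positivity
    rw [Real.norm_eq_abs, abs_of_nonneg h1]
  have hsummable : Summable fun n : ℕ => ∫ y in Ioo (0:ℝ) 1, ‖F n y‖ := by
    simp_rw [hnorm]; exact summable_inv_sq
  have hkey := hasSum_integral_of_summable_integral_norm hFint hsummable
  have htsum : ∀ y ∈ Ioo (0:ℝ) 1, ∑' n, F n y = -Real.log (1 - y) / y := by
    intro y hy
    have habs : |y| < 1 := by rw [abs_of_pos hy.1]; exact hy.2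
    have h := (Real.hasSum_pow_div_log_of_abs_lt_one habs).div_const y
    have h2 : HasSum (F · y) (-Real.log (1 - y) / y) := by
      refine h.congr_fun fun n => ?_
      have hy0 : y ≠ 0 := hy.1.ne'
      rw [hF]
      simp only
      rw [pow_succ]
      field_simp
    exact h2.tsum_eq
  have hval : ∫ y in Ioo (0:ℝ) 1, (∑' n, F n y) = ∫ y in Ioo (0:ℝ) 1, -Real.log (1 - y) / y :=
    setIntegral_congr_fun measurableSet_Ioo htsum
  rw [hval] at hkey
  have hsum2 : HasSum (fun n => ∫ y in Ioo (0:ℝ) 1, F n y)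
      (∫ y in Ioo (0:ℝ) 1, -Real.log (1 - y) / y) := hkey
  have := hsum2.tsum_eq
  have hts : ∑' n : ℕ, ∫ y in Ioo (0:ℝ) 1, F n y = π ^ 2 / 6 := by
    have := hasSum_inv_sq
    rw [show (fun n : ℕ => (1:ℝ) / ((n:ℝ) + 1) ^ 2) = fun n => ∫ y in Ioo (0:ℝ) 1, F n y
      from funext fun n => (hIoo n).symm] at this
    exact this.tsum_eq
  have hint : ∫ y in Ioo (0:ℝ) 1, -Real.log (1 - y) / y = π ^ 2 / 6 := by
    rw [← hts]; exact hsum2.tsum_eq.symm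
  rw [Li2, ← hint, intervalIntegral.integral_of_le hle, integral_Ioc_eq_integral_Ioo,
    ← integral_neg]
  congr 1
  funext y
  ring

theorem rogers_reflection :
    (∀ x : ℝ, 0 ≤ x → RL (x / (1 + x)) + RL (1 / (1 + x)) = RL 1) ∧
    RL 1 = Real.pi ^ 2 / 6 := by
  have hRL1 : RL 1 = π ^ 2 / 6 := by
    rw [RL]
    simp [Real.log_one, Li2_one]
  constructor
  · intro x hx
    rcases eq_or_lt_of_le hx with h | h
    · rw [← h]
      norm_num [RL_zero]
    · have h1x : (0:ℝ) < 1 + x := by linarith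
      have hy : 1/(1+x) ∈ Ioo (0:ℝ) 1 :=
        ⟨by positivity, by rw [div_lt_one h1x]; linarith⟩
      have hxy : x/(1+x) = 1 - 1/(1+x) := by field_simp; ring
      rw [hxy, add_comm]
      exact rogers_refl hy
  · exact hRL1
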